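/- Let T ∈ P, let s ∈ T, and let u be a function assigning to each natural number k a set u(k) ⊆ {0, 1, …, N_k − 1} with |u(k)| ≤ P_k. Then there exist t ∈ T with s ⊆ t and an i < N_{ind(t)} such that i ∉ u(ind(t)) and t⌢i ∈ T. -/
import Mathlib


/-- `P_0 = 1` and `P_{k+1} = P_k · N_k`, where `N_0 = 1` and `N_k = 2 ^ P_k`
for `k ≥ 1`; hence `P_k = N_0 · N_1 · … · N_{k-1}`. -/
def Pseq : ℕ → ℕ
  | 0 => 1
  | k + 1 => Pseq k * (if k = 0 then 1 else 2 ^ Pseq k)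

/-- `N_0 = 1` and `N_k = 2 ^ P_k` for `k ≥ 1`
(so `N_k = 1, 2, 4, 256, 2^2048, …`). -/
def Nseq (k : ℕ) : ℕ := if k = 0 then 1 else 2 ^ Pseq k

/-- A tree: a set of finite sequences of natural numbers closed under
initial segments. -/
def IsTree (T : Set (List ℕ)) : Prop :=
  ∀ s ∈ T, ∀ t : List ℕ, t <+: s → t ∈ T

/-- The node `t` has at least `n` successors in `T`, i.e. there are at least
`n` distinct `i` with `t ⌢ i ∈ T`. -/
def HasAtLeastSucc (T : Set (List ℕ)) (t : List ℕ) (n : ℕ) : Prop :=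
  ∃ S : Finset ℕ, S.card = n ∧ ∀ i ∈ S, t ++ [i] ∈ T

/-- `(Tr, ind)` is the master tree together with its index function:
`Tr` is a tree, `ind` is a bijection of `Tr` onto `ℕ` with `ind(⟨⟩) = 0`,
`ind` respects length and (for equal lengths) the lexicographic order, and
every `s ∈ Tr` with `ind s = k` has exactly the `N_k` successors `s ⌢ i`,
`i < N_k`, in `Tr`. -/
def IsMasterTree (Tr : Set (List ℕ)) (ind : List ℕ → ℕ) : Prop :=
  IsTree Tr ∧
  Set.BijOn ind Tr Set.univ ∧
  ind [] = 0 ∧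
  (∀ s ∈ Tr, ∀ t ∈ Tr, s.length < t.length → ind s < ind t) ∧
  (∀ s ∈ Tr, ∀ t ∈ Tr, s.length = t.length → List.Lex (· < ·) s t → ind s < ind t) ∧
  (∀ s ∈ Tr, ∀ i : ℕ, s ++ [i] ∈ Tr ↔ i < Nseq (ind s))

/-- `T` belongs to the forcing notion `𝒫`: `T` is a nonempty subtree of the
master tree `Tr` such that for every `s ∈ T` and every `m` there is a
`t ∈ T` extending `s` with at least `(P_{ind t})^m` successors in `T`. -/
def InForcing (Tr : Set (List ℕ)) (ind : List ℕ → ℕ) (T : Set (List ℕ)) : Prop :=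
  T.Nonempty ∧ T ⊆ Tr ∧ IsTree T ∧
  ∀ s ∈ T, ∀ m : ℕ, ∃ t ∈ T, s <+: t ∧ HasAtLeastSucc T t (Pseq (ind t) ^ m)

lemma Pseq_pos (k : ℕ) : 1 ≤ Pseq k := by
  induction k with
  | zero => simp [Pseq]
  | succ n ih =>
    simp only [Pseq]
    split <;> [simpa using ih; exact Nat.one_le_iff_ne_zero.2 (by positivity)]

lemma Pseq_ge_two {k : ℕ} (hk : 2 ≤ k) : 2 ≤ Pseq k := by
  induction k with
  | zero => omega
  | succ n ih =>
    rcases Nat.lt_or_ge n 2 with h | h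
    · interval_cases n
      · omega
      · simp [Pseq]
    · have h2 := ih (by omega)
      simp only [Pseq, if_neg (by omega : n ≠ 0)]
      calc 2 ≤ Pseq n := h2
        _ ≤ Pseq n * 2 ^ Pseq n := Nat.le_mul_of_pos_right _ (by positivity)

lemma step_longer (Tr : Set (List ℕ)) (ind : List ℕ → ℕ)
    (T : Set (List ℕ)) (hT : InForcing Tr ind T) (s : List ℕ) (hs : s ∈ T) :
    ∃ t ∈ T, s <+: t ∧ s.length < t.length := by
  obtain ⟨t, ht, hst, S, hScard, hS⟩ := hT.2.2.2 s hs 1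
  have hSne : S.Nonempty := by
    rw [← Finset.card_pos, hScard]
    exact Nat.pos_of_ne_zero (by have := Pseq_pos (ind t); positivity)
  obtain ⟨i, hi⟩ := hSne
  refine ⟨t ++ [i], hS i hi, hst.trans ⟨[i], rfl⟩, ?_⟩
  have := hst.length_le
  simp; omega

/-- Let `T ∈ 𝒫`, `s ∈ T`, and let `u` assign to each `k` a set
`u k ⊆ {0, …, N_k − 1}` with `|u k| ≤ P_k`. Then there are `t ∈ T` with
`s ⊆ t` and `i < N_{ind t}` such that `i ∉ u (ind t)` and `t ⌢ i ∈ T`. -/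
theorem exists_successor_avoiding
    (Tr : Set (List ℕ)) (ind : List ℕ → ℕ) (hM : IsMasterTree Tr ind)
    (T : Set (List ℕ)) (hT : InForcing Tr ind T) (s : List ℕ) (hs : s ∈ T)
    (u : ℕ → Finset ℕ)
    (hu1 : ∀ k : ℕ, ∀ i ∈ u k, i < Nseq k)
    (hu2 : ∀ k : ℕ, (u k).card ≤ Pseq k) :
    ∃ t ∈ T, s <+: t ∧ ∃ i : ℕ, i < Nseq (ind t) ∧ i ∉ u (ind t) ∧
      t ++ [i] ∈ T := by
  obtain ⟨s1, hs1, hss1, hl1⟩ := step_longer Tr ind T hT s hs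
  obtain ⟨s2, hs2, hs12, hl2⟩ := step_longer Tr ind T hT s1 hs1
  obtain ⟨t, ht, hst, S, hScard, hS⟩ := hT.2.2.2 s2 hs2 2
  have htlen : 2 ≤ t.length := by have := hst.length_le; omega
  have htTr : t ∈ Tr := hT.2.1 ht
  -- prefixes of t
  have h0 : ([] : List ℕ) ∈ Tr := hM.1 t htTr [] (List.nil_prefix)
  have h1 : t.take 1 ∈ Tr := hM.1 t htTr _ (List.take_prefix 1 t)
  have hlen1 : (t.take 1).length = 1 := by simp; omega
  have hi1 : 0 < ind (t.take 1) := by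
    have := hM.2.2.2.1 [] h0 (t.take 1) h1 (by simp [hlen1])
    omega
  have hit : 2 ≤ ind t := by
    have := hM.2.2.2.1 (t.take 1) h1 t htTr (by omega)
    omega
  have hP2 : 2 ≤ Pseq (ind t) := Pseq_ge_two hit
  have hcard : (u (ind t)).card < S.card := by
    rw [hScard]
    calc (u (ind t)).card ≤ Pseq (ind t) := hu2 _
      _ < Pseq (ind t) ^ 2 := by nlinarith
  have hns : ¬ (S ⊆ u (ind t)) := fun h => absurd (Finset.card_le_card h) (by omega)
  obtain ⟨i, hiS, hiu⟩ := Finset.not_subset.mp hns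
  have hmem : t ++ [i] ∈ T := hS i hiS
  have hiN : i < Nseq (ind t) := (hM.2.2.2.2.2 t htTr i).1 (hT.2.1 hmem)
  exact ⟨t, ht, hss1.trans (hs12.trans hst), i, hiN, hiu, hmem⟩
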